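/- Let A be a unital subalgebra of the bounded operators on a Hilbert space H. Suppose there exist linear submanifolds M, N ⊆ H such that (1) TM ⊆ M and TN ⊆ N for every T ∈ A, (2) M ∩ N = {0} and M + N is dense in H, and (3) the closures of M and N have nonzero intersection. Then A does not have the closability property, i.e., there exists a densely defined linear transformation commuting with A which is not closable. -/

import Mathlib

/-- A (possibly unbounded) densely defined linear transformation `X` commutes with a
set `A` of bounded operators if the domain of `X` is invariant under every `T ∈ A`
and `X T h = T X h` on the domain. -/
def Commutes {H : Type*} [NormedAddCommGroup H] [InnerProductSpace ℂ H]
    (A : Set (H →L[ℂ] H)) (X : H →ₗ.[ℂ] H) : Prop :=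
  ∀ T ∈ A, ∀ h : X.domain, ∃ h' : X.domain, (h' : H) = T h ∧ X h' = T (X h)

/-- A set of bounded operators has the closability property if every densely defined
linear transformation commuting with it is closable. -/
def ClosabilityProperty {H : Type*} [NormedAddCommGroup H] [InnerProductSpace ℂ H]
    (A : Set (H →L[ℂ] H)) : Prop :=
  ∀ X : H →ₗ.[ℂ] H, Dense (X.domain : Set H) → Commutes A X → X.IsClosable


/-- If a unital algebra `A` admits invariant linear manifolds `M, N` with
`M ∩ N = {0}`, `M + N` dense, and `closure M ∩ closure N ≠ {0}`, then `A` fails the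
closability property: some densely defined linear transformation commuting with `A`
is not closable. -/
theorem stmt1 {H : Type*} [NormedAddCommGroup H] [InnerProductSpace ℂ H] [CompleteSpace H]
    (A : Subalgebra ℂ (H →L[ℂ] H)) (M N : Submodule ℂ H)
    (hM : ∀ T ∈ A, ∀ x ∈ M, T x ∈ M) (hN : ∀ T ∈ A, ∀ x ∈ N, T x ∈ N)
    (hMN : M ⊓ N = ⊥) (hdense : Dense ((M ⊔ N : Submodule ℂ H) : Set H))
    (hcl : ∃ x : H, x ≠ 0 ∧ x ∈ closure (M : Set H) ∧ x ∈ closure (N : Set H)) :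
    ∃ X : H →ₗ.[ℂ] H, Dense (X.domain : Set H) ∧ Commutes (A : Set (H →L[ℂ] H)) X ∧
      ¬ X.IsClosable := by
  obtain ⟨x, hx0, hxM, hxN⟩ := hcl
  set W : Submodule ℂ H := M ⊔ N with hW
  have hMW : M ≤ W := le_sup_left
  have hNW : N ≤ W := le_sup_right
  set M' : Submodule ℂ W := M.comap W.subtype with hM'
  set N' : Submodule ℂ W := N.comap W.subtype with hN'
  have hcompl : IsCompl M' N' := by
    constructor
    · rw [disjoint_iff, eq_bot_iff]
      rintro ⟨y, hy⟩ ⟨h1, h2⟩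
      have : y ∈ M ⊓ N := ⟨h1, h2⟩
      rw [hMN] at this
      exact Submodule.mem_bot ℂ |>.mpr (Subtype.ext ((Submodule.mem_bot ℂ).mp this))
    · rw [codisjoint_iff, eq_top_iff]
      rintro ⟨y, hy⟩ -
      obtain ⟨m, hm, n, hn, hmn⟩ := Submodule.mem_sup.mp hy
      have : (⟨y, hy⟩ : W) = ⟨m, hMW hm⟩ + ⟨n, hNW hn⟩ := by
        ext; simp [hmn]
      rw [this]
      exact Submodule.add_mem_sup hm hn
  set π := M'.projectionOnto N' hcompl with hπ
  set f : W →ₗ[ℂ] H := W.subtype ∘ₗ M'.subtype ∘ₗ π with hf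
  have fM : ∀ (m : H) (hm : m ∈ M), f ⟨m, hMW hm⟩ = m := by
    intro m hm
    simp [hf, hπ, Submodule.projectionOnto_apply_left hcompl ⟨⟨m, hMW hm⟩, hm⟩]
  have fN : ∀ (n : H) (hn : n ∈ N), f ⟨n, hNW hn⟩ = 0 := by
    intro n hn
    simp [hf, hπ, Submodule.projectionOnto_apply_right hcompl ⟨⟨n, hNW hn⟩, hn⟩]
  refine ⟨⟨W, f⟩, hdense, ?_, ?_⟩
  · intro T hT h
    obtain ⟨m, hm, n, hn, hmn⟩ := Submodule.mem_sup.mp h.2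
    have hTm : T m ∈ M := hM T hT m hm
    have hTn : T n ∈ N := hN T hT n hn
    have hTh : (T (h : H)) ∈ W := by
      rw [← hmn, map_add]
      exact Submodule.add_mem_sup hTm hTn
    refine ⟨⟨T (h : H), hTh⟩, rfl, ?_⟩
    have h1 : (⟨T (h : H), hTh⟩ : W) = ⟨T m, hMW hTm⟩ + ⟨T n, hNW hTn⟩ := by
      ext; simp [← hmn, map_add]
    have h2 : (h : W) = ⟨m, hMW hm⟩ + ⟨n, hNW hn⟩ := by
      ext; simp [hmn]
    show f _ = T (f _)
    rw [h1, h2, map_add, map_add, fM _ hTm, fN _ hTn, fM _ hm, fN _ hn,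
      add_zero, add_zero]
  · intro hcls
    obtain ⟨g, hg⟩ := hcls
    set X : H →ₗ.[ℂ] H := ⟨W, f⟩ with hX
    have hmem : (0, x) ∈ closure (X.graph : Set (H × H)) := by
      obtain ⟨u, hu, hul⟩ := mem_closure_iff_seq_limit.mp hxM
      obtain ⟨v, hv, hvl⟩ := mem_closure_iff_seq_limit.mp hxN
      have htend : Filter.Tendsto (fun k => ((u k - v k : H), u k)) Filter.atTop
          (nhds ((0 : H), x)) := by
        have hd : Filter.Tendsto (fun k => (u k - v k : H)) Filter.atTop (nhds 0) := by
          simpa using hul.sub hvl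
        exact hd.prodMk_nhds hul
      refine mem_closure_of_tendsto htend ?_
      filter_upwards with k
      have hw : u k - v k ∈ W := W.sub_mem (hMW (hu k)) (hNW (hv k))
      have hXval : X ⟨u k - v k, hw⟩ = u k := by
        have heq : (⟨u k - v k, hw⟩ : W) = ⟨u k, hMW (hu k)⟩ - ⟨v k, hNW (hv k)⟩ := by
          ext; simp
        show f _ = _
        rw [heq, map_sub, fM _ (hu k), fN _ (hv k), sub_zero]
      exact X.mem_graph_iff.mpr ⟨⟨u k - v k, hw⟩, rfl, hXval⟩
    rw [← Submodule.topologicalClosure_coe, hg] at hmem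
    obtain ⟨y, hy1, hy2⟩ := g.mem_graph_iff.mp hmem
    have hy0 : y = 0 := Subtype.ext (by simpa using hy1)
    rw [hy0] at hy2
    rw [g.map_zero] at hy2
    exact hx0 hy2.symm
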